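/- If $\mathcal{X}$ is a nearly truncation quasi-greedy basis of a quasi-Banach space, then its nearly truncation quasi-greedy function $\lambda$ is non-increasing on $(0,1)$. -/

import Mathlib

open Finset Set

/-- A (quasi-)basis of a quasi-Banach space: a quasi-norm `q` with modulus of
concavity `κ`, together with a norm-bounded biorthogonal system `(e, c)`. -/
structure QBasis (X : Type*) [AddCommGroup X] [Module ℝ X] where
  q : X → ℝ
  κ : ℝ
  one_le_κ : 1 ≤ κ
  q_nonneg : ∀ f, 0 ≤ q f
  q_eq_zero_iff : ∀ f, q f = 0 ↔ f = 0
  q_smul : ∀ (t : ℝ) (f : X), q (t • f) = |t| * q f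
  q_add : ∀ f g, q (f + g) ≤ κ * (q f + q g)
  e : ℕ → X
  c : ℕ → X →ₗ[ℝ] ℝ
  biorth : ∀ m n, c m (e n) = if m = n then (1 : ℝ) else 0
  e_bdd : ∃ M, ∀ n, q (e n) ≤ M
  c_bdd : ∃ M, ∀ n f, |c n f| ≤ M * q f

namespace QBasis

variable {X : Type*} [AddCommGroup X] [Module ℝ X] (B : QBasis X)

/-- Coordinate projection on a finite set `A`. -/
noncomputable def S (A : Finset ℕ) (f : X) : X := ∑ n ∈ A, B.c n f • B.e n

/-- The set `𝒬` of vectors with coefficients in the unit ball of `ℓ∞`. -/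
def inQ (f : X) : Prop := ∀ n, |B.c n f| ≤ 1

/-- `A` is the set `A(a,f) = {n : |c n f| ≥ a}` of coefficients above the threshold `a`. -/
def thrSet (a : ℝ) (f : X) (A : Finset ℕ) : Prop := ∀ n, n ∈ A ↔ a ≤ |B.c n f|

/-- `A` is a greedy set of `f`. -/
def greedySet (f : X) (A : Finset ℕ) : Prop :=
  ∀ n ∈ A, ∀ k, k ∉ A → |B.c k f| ≤ |B.c n f|

/-- The restricted truncation operator associated with a finite set `A`:
`R(f,A) = min_{n∈A} |c n f| ∑_{n∈A} sgn (c n f) • e n`. -/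
noncomputable def R (A : Finset ℕ) (f : X) : X :=
  if h : A.Nonempty then
    (A.inf' h fun n => |B.c n f|) • ∑ n ∈ A, Real.sign (B.c n f) • B.e n
  else 0

/-- `lam` is the nearly truncation quasi-greedy function of the basis: for every
`a ∈ (0,1)`, `lam a` is the smallest constant `C` with `q (R^{(a)} f) ≤ C * q f`
for all `f ∈ 𝒬`. -/
def NTQGFun (lam : ℝ → ℝ) : Prop :=
  ∀ a ∈ Set.Ioo (0 : ℝ) 1,
    (∀ f, B.inQ f → ∀ A : Finset ℕ, B.thrSet a f A → B.q (B.R A f) ≤ lam a * B.q f) ∧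
    (∀ C : ℝ, (∀ f, B.inQ f → ∀ A : Finset ℕ, B.thrSet a f A → B.q (B.R A f) ≤ C * B.q f) →
      lam a ≤ C)

/-- The basis is nearly truncation quasi-greedy. -/
def NearlyTQG : Prop :=
  ∀ a ∈ Set.Ioo (0 : ℝ) 1, ∃ C : ℝ,
    ∀ f, B.inQ f → ∀ A : Finset ℕ, B.thrSet a f A → B.q (B.R A f) ≤ C * B.q f

/-- The basis is nearly unconditional. -/
def NearlyUnconditional : Prop :=
  ∀ a ∈ Set.Ioo (0 : ℝ) 1, ∃ C : ℝ,
    ∀ f, B.inQ f → ∀ Aa A : Finset ℕ, B.thrSet a f Aa → A ⊆ Aa → B.q (B.S A f) ≤ C * B.q f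

/-- `phi` is the nearly unconditionality function: `phi a` is the smallest `C` with
`q (S_A f) ≤ C * q f` for `f ∈ 𝒬` and `A ⊆ A(a,f)`. -/
def NUFun (phi : ℝ → ℝ) : Prop :=
  ∀ a ∈ Set.Ioo (0 : ℝ) 1,
    (∀ f, B.inQ f → ∀ Aa A : Finset ℕ, B.thrSet a f Aa → A ⊆ Aa →
      B.q (B.S A f) ≤ phi a * B.q f) ∧
    (∀ C : ℝ, (∀ f, B.inQ f → ∀ Aa A : Finset ℕ, B.thrSet a f Aa → A ⊆ Aa →
      B.q (B.S A f) ≤ C * B.q f) → phi a ≤ C)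

/-- `theta` is the thresholding-boundedness function: `theta a` is the smallest `C` with
`q (S_{A(a,f)} f) ≤ C * q f` for `f ∈ 𝒬`. -/
def ThetaFun (theta : ℝ → ℝ) : Prop :=
  ∀ a ∈ Set.Ioo (0 : ℝ) 1,
    (∀ f, B.inQ f → ∀ A : Finset ℕ, B.thrSet a f A → B.q (B.S A f) ≤ theta a * B.q f) ∧
    (∀ C : ℝ, (∀ f, B.inQ f → ∀ A : Finset ℕ, B.thrSet a f A → B.q (B.S A f) ≤ C * B.q f) →
      theta a ≤ C)

/-- The basis is truncation quasi-greedy: the restricted truncation operators are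
uniformly bounded over greedy sets. -/
def TruncationQG : Prop :=
  ∃ C : ℝ, ∀ f (A : Finset ℕ), B.greedySet f A → B.q (B.R A f) ≤ C * B.q f

end QBasis

lemma sign_pos_mul (t x : ℝ) (ht : 0 < t) : Real.sign (t * x) = Real.sign x := by
  rcases lt_trichotomy x 0 with h | h | h
  · rw [Real.sign_of_neg h, Real.sign_of_neg (mul_neg_of_pos_of_neg ht h)]
  · simp [h]
  · rw [Real.sign_of_pos h, Real.sign_of_pos (mul_pos ht h)]

/-- the nearly truncation quasi-greedy function of a nearly truncation
quasi-greedy basis is non-increasing on `(0,1)`. -/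
theorem stmt0 {X : Type*} [AddCommGroup X] [Module ℝ X] (B : QBasis X)
    (lam : ℝ → ℝ) (hlam : B.NTQGFun lam) :
    ∀ a ∈ Set.Ioo (0 : ℝ) 1, ∀ b ∈ Set.Ioo (0 : ℝ) 1, a ≤ b → lam b ≤ lam a := by
  intro a ha b hb hab
  obtain ⟨ha0, ha1⟩ := ha
  obtain ⟨hb0, hb1⟩ := hb
  set t : ℝ := a / b with ht
  have ht0 : 0 < t := div_pos ha0 hb0
  have htle : t ≤ 1 := div_le_one_of_le₀ hab hb0.le
  refine (hlam b ⟨hb0, hb1⟩).2 (lam a) ?_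
  intro f hf A hA
  set g : X := t • f with hg
  have hc : ∀ n, B.c n g = t * B.c n f := by
    intro n; simp [hg, map_smul, smul_eq_mul]
  have hgQ : B.inQ g := by
    intro n
    rw [hc, abs_mul, abs_of_pos ht0]
    calc t * |B.c n f| ≤ t * 1 := by
          exact mul_le_mul_of_nonneg_left (hf n) ht0.le
      _ ≤ 1 := by linarith
  have hgA : B.thrSet a g A := by
    intro n
    rw [hc, abs_mul, abs_of_pos ht0, hA n]
    constructor
    · intro h
      calc a = t * b := by rw [ht, div_mul_cancel₀ a hb0.ne']
        _ ≤ t * |B.c n f| := mul_le_mul_of_nonneg_left h ht0.le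
    · intro h
      have : t * b ≤ t * |B.c n f| := by
        rw [ht, div_mul_cancel₀ a hb0.ne']; rw [ht] at h; exact h
      have := (mul_le_mul_iff_right₀ ht0).mp this
      exact this
  have hRg : B.R A g = t • B.R A f := by
    unfold QBasis.R
    by_cases hAne : A.Nonempty
    · rw [dif_pos hAne, dif_pos hAne]
      have h1 : (A.inf' hAne fun n => |B.c n g|) = t * A.inf' hAne fun n => |B.c n f| := by
        rw [Finset.apply_inf'_eq_inf'_comp hAne (fun x => t * x)
          (fun x y => by exact mul_min_of_nonneg _ _ ht0.le)]
        exact Finset.inf'_congr hAne rfl fun n _ => by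
          rw [hc, abs_mul, abs_of_pos ht0]; rfl
      have h2 : (∑ n ∈ A, Real.sign (B.c n g) • B.e n)
          = ∑ n ∈ A, Real.sign (B.c n f) • B.e n := by
        refine Finset.sum_congr rfl fun n _ => by rw [hc, sign_pos_mul _ _ ht0]
      rw [h1, h2, mul_smul]
    · rw [dif_neg hAne, dif_neg hAne, smul_zero]
  have hbound := (hlam a ⟨ha0, ha1⟩).1 g hgQ A hgA
  rw [hRg, hg, B.q_smul, B.q_smul, abs_of_pos ht0] at hbound
  have : t * B.q (B.R A f) ≤ t * (lam a * B.q f) := by linarith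
  exact le_of_mul_le_mul_left this ht0
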